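/- Let A be a symmetric (2n)×(2n) real matrix and v ∈ ℝ^{2n} with |v| = 1. Then ||Av|² − tr(A)·(vᵀAv) − ½(‖A‖² − tr(A)²)| ≤ (n−1)(‖A‖² − |Av|²), where ‖A‖² denotes the sum of squares of the entries of A (Frobenius norm squared). -/

import Mathlib

open Finset Matrix

private theorem keylemma (n : ℕ) (lam w : Fin (2*n) → ℝ) (hw0 : ∀ i, 0 ≤ w i)
    (hw1 : ∑ i, w i = 1) :
    |(∑ i, lam i ^ 2 * w i) - (∑ i, lam i) * (∑ i, lam i * w i)
      - (1/2) * ((∑ i, lam i ^ 2) - (∑ i, lam i) ^ 2)|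
      ≤ ((n : ℝ) - 1) * ((∑ i, lam i ^ 2) - ∑ i, lam i ^ 2 * w i) := by
  classical
  set S := ∑ i, lam i with hS
  set Sw := ∑ i, lam i * w i with hSw
  set T := ∑ i, lam i ^ 2 with hT
  set Tw := ∑ i, lam i ^ 2 * w i with hTw
  set c : Fin (2*n) → Fin (2*n) → ℝ := fun i j => if i = j then 0 else 1 - w i - w j with hc
  have hsplit : ∀ i : Fin (2*n), ∀ j, c i j
      = (1 - w i - w j) - (if i = j then 1 - w i - w j else 0) := by
    intro i j; by_cases h : i = j <;> simp [hc, h]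
  -- identity
  have hid : ∑ i, ∑ j, lam i * lam j * c i j
      = 2 * Tw - 2 * S * Sw + S ^ 2 - T := by
    have h1 : ∀ i : Fin (2*n), ∑ j, lam i * lam j * c i j
        = (lam i * (1 - w i) * S - lam i * Sw) - lam i * lam i * (1 - w i - w i) := by
      intro i
      have e : ∀ j, lam i * lam j * c i j
          = (lam i * (1 - w i) * lam j - lam i * (lam j * w j))
            - (if i = j then lam i * lam j * (1 - w i - w j) else 0) := by
        intro j
        rw [hsplit i j]
        by_cases h : i = j <;> simp [h] <;> ring
      simp only [e, Finset.sum_sub_distrib, Finset.sum_ite_eq, Finset.mem_univ, if_true,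
        ← Finset.mul_sum, hS, hSw]
    rw [Finset.sum_congr rfl fun i _ => h1 i]
    have e2 : ∀ i : Fin (2*n), (lam i * (1 - w i) * S - lam i * Sw) - lam i * lam i * (1 - w i - w i)
        = (S * lam i - S * (lam i * w i) - Sw * lam i - lam i ^ 2) + 2 * (lam i ^ 2 * w i) := by
      intro i; ring
    simp only [e2, Finset.sum_add_distrib, Finset.sum_sub_distrib, ← Finset.mul_sum,
      ← hS, ← hSw, ← hT, ← hTw]
    ring
  -- nonneg and symmetry of c
  have hc_nonneg : ∀ i j, 0 ≤ c i j := by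
    intro i j
    by_cases h : i = j
    · simp [hc, h]
    · have hle : w i + w j ≤ ∑ k, w k := by
        have := Finset.sum_le_sum_of_subset_of_nonneg (Finset.subset_univ ({i, j} : Finset (Fin (2*n))))
          (fun k _ _ => hw0 k)
        rwa [Finset.sum_pair h] at this
      simp only [hc, h, if_false]
      linarith [hle.trans_eq hw1]
  have hc_symm : ∀ i j, c i j = c j i := by
    intro i j
    by_cases h : i = j
    · rw [h]
    · simp only [hc, h, Ne.symm h, if_false]; ring
  -- row sums of c
  have hrow : ∀ i, ∑ j, c i j = (2 * (n:ℝ) - 2) * (1 - w i) := by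
    intro i
    simp only [hsplit i, Finset.sum_sub_distrib, Finset.sum_ite_eq, Finset.mem_univ, if_true,
      Finset.sum_const, Finset.card_univ, Fintype.card_fin, nsmul_eq_mul, hw1]
    push_cast
    ring
  -- the elementwise bound
  have habs : ∀ i j, |lam i * lam j * c i j| ≤ (1/2) * (lam i ^ 2 + lam j ^ 2) * c i j := by
    intro i j
    have h0 := hc_nonneg i j
    have h1 : |lam i * lam j| ≤ (1/2) * (lam i ^ 2 + lam j ^ 2) := by
      rw [abs_le]
      constructor <;> nlinarith [sq_nonneg (lam i - lam j), sq_nonneg (lam i + lam j)]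
    calc |lam i * lam j * c i j| = |lam i * lam j| * c i j := by
          rw [abs_mul, abs_of_nonneg h0]
      _ ≤ (1/2) * (lam i ^ 2 + lam j ^ 2) * c i j := mul_le_mul_of_nonneg_right h1 h0
  have hbound : |∑ i, ∑ j, lam i * lam j * c i j|
      ≤ ∑ i, ∑ j, (1/2) * (lam i ^ 2 + lam j ^ 2) * c i j := by
    refine (Finset.abs_sum_le_sum_abs _ _).trans ?_
    refine Finset.sum_le_sum fun i _ => (Finset.abs_sum_le_sum_abs _ _).trans ?_
    exact Finset.sum_le_sum fun j _ => habs i j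
  have hswap2 : ∑ i, ∑ j, lam j ^ 2 * c i j = ∑ i, lam i ^ 2 * ∑ j, c i j := by
    rw [Finset.sum_comm]
    refine Finset.sum_congr rfl fun j _ => ?_
    rw [← Finset.mul_sum]
    exact congrArg _ (Finset.sum_congr rfl fun i _ => by rw [hc_symm])
  have hfact : ∀ i : Fin (2*n), lam i ^ 2 * ∑ j, c i j
      = (2 * (n:ℝ) - 2) * lam i ^ 2 - (2 * (n:ℝ) - 2) * (lam i ^ 2 * w i) := by
    intro i; rw [hrow]; ring
  have hsum1 : ∑ i, lam i ^ 2 * ∑ j, c i j = (2 * (n:ℝ) - 2) * (T - Tw) := by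
    simp only [hfact, Finset.sum_sub_distrib, ← Finset.mul_sum, ← hT, ← hTw]
    ring
  have hsum2 : ∑ i, ∑ j, (1/2) * (lam i ^ 2 + lam j ^ 2) * c i j
      = (2 * (n:ℝ) - 2) * (T - Tw) := by
    have e : ∀ i j : Fin (2*n), (1/2) * (lam i ^ 2 + lam j ^ 2) * c i j
        = (1/2) * (lam i ^ 2 * c i j) + (1/2) * (lam j ^ 2 * c i j) := fun i j => by ring
    have hrowb : ∀ i : Fin (2*n), ∑ j, (1/2) * (lam i ^ 2 + lam j ^ 2) * c i j
        = (1/2) * (lam i ^ 2 * ∑ j, c i j) + (1/2) * ∑ j, lam j ^ 2 * c i j := by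
      intro i
      simp only [e]
      rw [Finset.sum_add_distrib]
      congr 1
      · rw [← Finset.mul_sum, ← Finset.mul_sum]
      · rw [← Finset.mul_sum]
    rw [Finset.sum_congr rfl fun i _ => hrowb i, Finset.sum_add_distrib, ← Finset.mul_sum,
      ← Finset.mul_sum, hswap2, hsum1]
    ring
  have hrewrite : Tw - S * Sw - (1/2) * (T - S ^ 2)
      = (1/2) * (∑ i, ∑ j, lam i * lam j * c i j) := by rw [hid]; ring
  rw [hrewrite, abs_mul, abs_of_nonneg (by norm_num : (0:ℝ) ≤ 1/2)]
  calc (1/2) * |∑ i, ∑ j, lam i * lam j * c i j|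
      ≤ (1/2) * ((2 * (n:ℝ) - 2) * (T - Tw)) := by
        apply mul_le_mul_of_nonneg_left _ (by norm_num)
        rw [← hsum2]
        exact hbound
    _ = ((n:ℝ) - 1) * (T - Tw) := by ring


private lemma sumsq_mulVec {m : ℕ} (M : Matrix (Fin m) (Fin m) ℝ) (h : Mᵀ * M = 1) (x : Fin m → ℝ) :
    ∑ i, (M *ᵥ x) i ^ 2 = ∑ i, x i ^ 2 := by
  have h1 : (M *ᵥ x) ⬝ᵥ (M *ᵥ x) = x ⬝ᵥ x := by
    rw [Matrix.dotProduct_mulVec, ← Matrix.mulVec_transpose, Matrix.mulVec_mulVec, h,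
      Matrix.one_mulVec]
  simpa [dotProduct, sq] using h1


/-- Symmetric-matrix form of the fundamental inequality. -/
theorem stmt1 (n : ℕ) (hn : 1 ≤ n) (A : Matrix (Fin (2*n)) (Fin (2*n)) ℝ)
    (hA : A.IsSymm) (v : Fin (2*n) → ℝ) (hv : ∑ i, v i ^ 2 = 1) :
    |(∑ i, (A.mulVec v i) ^ 2) - A.trace * (∑ i, v i * A.mulVec v i)
      - (1/2) * ((∑ i, ∑ j, A i j ^ 2) - A.trace ^ 2)|
      ≤ ((n : ℝ) - 1) * ((∑ i, ∑ j, A i j ^ 2) - ∑ i, (A.mulVec v i) ^ 2) := by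
  classical
  have hH : A.IsHermitian := by
    rw [Matrix.IsHermitian, Matrix.conjTranspose_eq_transpose_of_trivial]; exact hA
  set U : Matrix (Fin (2*n)) (Fin (2*n)) ℝ := (hH.eigenvectorUnitary : Matrix (Fin (2*n)) (Fin (2*n)) ℝ) with hU
  set lam : Fin (2*n) → ℝ := hH.eigenvalues with hlam
  have hstar : star U = Uᵀ := by
    rw [Matrix.star_eq_conjTranspose, Matrix.conjTranspose_eq_transpose_of_trivial]
  have hU1 : star U * U = 1 := Matrix.mem_unitaryGroup_iff'.mp hH.eigenvectorUnitary.2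
  have hU2 : U * star U = 1 := Matrix.mem_unitaryGroup_iff.mp hH.eigenvectorUnitary.2
  have hofReal : (RCLike.ofReal ∘ lam : Fin (2*n) → ℝ) = lam := by
    rw [RCLike.ofReal_real_eq_id]; rfl
  have hdiag : star U * A * U = Matrix.diagonal lam := by
    rw [← hofReal]; have := hH.conjStarAlgAut_star_eigenvectorUnitary; rw [Unitary.conjStarAlgAut_star_apply] at this; exact this
  have hspec : A = U * Matrix.diagonal lam * star U := by
    rw [← hdiag]
    have e : U * (star U * A * U) * star U = (U * star U) * A * (U * star U) := by noncomm_ring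
    rw [e, hU2, Matrix.one_mul, Matrix.mul_one]
  set y : Fin (2*n) → ℝ := star U *ᵥ v with hy
  -- fact 1 : sum y^2 = 1
  have horthT : (star U)ᵀ * (star U) = 1 := by
    rw [hstar, Matrix.transpose_transpose, ← hstar]; exact hU2
  have hy1 : ∑ i, y i ^ 2 = 1 := by rw [hy, sumsq_mulVec _ horthT]; exact hv
  -- A *ᵥ v
  have hAv : A *ᵥ v = U *ᵥ (Matrix.diagonal lam *ᵥ y) := by
    conv_lhs => rw [hspec]
    rw [Matrix.mulVec_mulVec, Matrix.mulVec_mulVec]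
  have horthU : Uᵀ * U = 1 := by rw [← hstar]; exact hU1
  -- fact 2 : |Av|^2
  have hsq : ∑ i, (A *ᵥ v) i ^ 2 = ∑ i, lam i ^ 2 * y i ^ 2 := by
    rw [hAv, sumsq_mulVec _ horthU]
    exact Finset.sum_congr rfl fun i _ => by rw [Matrix.mulVec_diagonal]; ring
  -- fact 3 : v ⬝ Av
  have hvU : v ᵥ* U = y := by rw [hy, hstar, Matrix.mulVec_transpose]
  have hdot : ∑ i, v i * (A *ᵥ v) i = ∑ i, lam i * y i ^ 2 := by
    have h1 : ∑ i, v i * (A *ᵥ v) i = v ⬝ᵥ (A *ᵥ v) := rfl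
    rw [h1, hAv, Matrix.dotProduct_mulVec, hvU]
    exact Finset.sum_congr rfl fun i _ => by rw [Matrix.mulVec_diagonal]; ring
  -- fact 4 : trace
  have htrace : A.trace = ∑ i, lam i := by
    conv_lhs => rw [hspec]
    rw [Matrix.trace_mul_cycle, hU1, Matrix.one_mul, Matrix.trace_diagonal]
  -- fact 5 : Frobenius norm
  have hfrob : ∑ i, ∑ j, A i j ^ 2 = ∑ i, lam i ^ 2 := by
    have ha : ∑ i, ∑ j, A i j ^ 2 = (A * A).trace := by
      rw [Matrix.trace]
      refine Finset.sum_congr rfl fun i _ => ?_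
      rw [Matrix.diag_apply, Matrix.mul_apply]
      refine Finset.sum_congr rfl fun j _ => ?_
      rw [sq, hA.apply j i]
    have hb : (A * A).trace = ∑ i, lam i ^ 2 := by
      have h2 : A * A = U * (Matrix.diagonal lam * Matrix.diagonal lam) * star U := by
        conv_lhs => rw [hspec]
        have e : U * Matrix.diagonal lam * star U * (U * Matrix.diagonal lam * star U)
            = U * Matrix.diagonal lam * (star U * U) * Matrix.diagonal lam * star U := by
          noncomm_ring
        rw [e, hU1, Matrix.mul_one]
        noncomm_ring
      rw [h2, Matrix.trace_mul_cycle, hU1, Matrix.one_mul,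
        Matrix.diagonal_mul_diagonal, Matrix.trace_diagonal]
      exact Finset.sum_congr rfl fun i _ => (sq (lam i)).symm ▸ rfl
    rw [ha, hb]
  -- assemble
  have key := keylemma n lam (fun i => y i ^ 2) (fun i => sq_nonneg (y i)) hy1
  simp only [Matrix.mulVec] at *
  rw [hsq, hdot, htrace, hfrob] at *
  convert key using 3
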